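/- Let n ≥ 1, q, M, C₀ > 0, and let Ω ⊆ ℝⁿ be a bounded open set. Let A : ℝⁿ → ℝ^{n×n} have symmetric values with entries a_{ij} satisfying sup_y |a_{ij}(y)| ≤ M, and Ā a constant symmetric matrix. Suppose u : Ω → ℝ is five times continuously differentiable with −Ā:D²u = f on Ω and all partial derivatives up to order 5 bounded by M; each v^{kl} : ℝⁿ → ℝ is twice continuously differentiable with −A(y):D²v^{kl}(y) = a_{kl}(y) − ā_{kl} on ℝⁿ and sup(|v^{kl}| + |∇v^{kl}|) ≤ M; constants c_j^{kl} ∈ ℝ; each χ^{jkl} : ℝⁿ → ℝ is twice continuously differentiable with −A(y):D²χ^{jkl}(y) = (A(y)e_j)·∇v^{kl}(y) − c_j^{kl} on ℝⁿ and sup(|χ^{jkl}| + |∇χ^{jkl}|) ≤ M; h := ∑_{j,k,l} c_j^{kl} ∂³_{jkl}u. For each ε ∈ (0,1] suppose uᵋ, θᵋ, θ_χᵋ, wᵋ, zᵋ : Ω → ℝ are twice differentiable with: −A(x/ε):D²uᵋ = f, A(x/ε):D²θᵋ = 0, A(x/ε):D²θ_χᵋ = 0, −A(x/ε):D²wᵋ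 = ∑_{i,j,k,l} a_{ij}(x/ε) ∂_i v^{kl}(x/ε) ∂³_{jkl}u, and −A(x/ε):D²zᵋ = −h on Ω. Assume the uniform interior estimate: for every ε ∈ (0,1] and every twice differentiable w : Ω → ℝ extending continuously to the closure of Ω and vanishing on ∂Ω, sup_Ω(|w| + |∇w|) ≤ C₀ ‖A(·/ε):D²w‖_{L^q(Ω)}; and assume the functions uᵋ − u − ε²(∑ v^{kl}(·/ε)∂²_{kl}u + θᵋ) − 2εwᵋ and wᵋ + zᵋ − ε²(∑ χ^{jkl}(·/ε)∂³_{jkl}u + θ_χᵋ) extend continuously to the closure of Ω and vanish on ∂Ω. Then there exist C > 0 and ε₀ ∈ (0,1] such that for all ε ∈ (0,ε₀): sup_Ω ( |Eᵋ| + |∇Eᵋ| ) ≤ C ε², where Eᵋ := uᵋ − u + 2εzᵋ − ε² ∑_{k,l} v^{kl}(·/ε)∂²_{kl}u − ε²θᵋ − 2ε³θ_χᵋ. -/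

import Mathlib

open MeasureTheory

/-- The partial derivative `∂_i f` of `f : ℝⁿ → ℝ`, as the Fréchet derivative applied to the
`i`-th standard basis vector. -/
noncomputable def pd {n : ℕ} (i : Fin n) (f : (Fin n → ℝ) → ℝ) : (Fin n → ℝ) → ℝ :=
  fun x => fderiv ℝ f x (Pi.single i 1)

/-- `f` is twice differentiable on `Ω`: it is differentiable on `Ω` and so are all its first
partial derivatives. -/
def TwiceDiffOn {n : ℕ} (f : (Fin n → ℝ) → ℝ) (Ω : Set (Fin n → ℝ)) : Prop :=
  DifferentiableOn ℝ f Ω ∧ ∀ i : Fin n, DifferentiableOn ℝ (pd i f) Ω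

/-- The Euclidean norm `|∇f(x)|` of the gradient of `f` at `x`. -/
noncomputable def gradNorm {n : ℕ} (f : (Fin n → ℝ) → ℝ) (x : Fin n → ℝ) : ℝ :=
  Real.sqrt (∑ i, (pd i f x) ^ 2)

/-- The `L^q(Ω)` norm `(∫_Ω |w|^q)^{1/q}` (with respect to Lebesgue measure). -/
noncomputable def lpNorm {n : ℕ} (q : ℝ) (Ω : Set (Fin n → ℝ))
    (w : (Fin n → ℝ) → ℝ) : ℝ :=
  (∫ x in Ω, |w x| ^ q) ^ (1 / q)

variable {n : ℕ} {f g : (Fin n → ℝ) → ℝ} {x : Fin n → ℝ} {i : Fin n}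

lemma pd_congr_nhds (h : f =ᶠ[nhds x] g) (i : Fin n) : pd i f x = pd i g x := by
  unfold pd; rw [Filter.EventuallyEq.fderiv_eq h]

lemma pd_eqOn {Ω : Set (Fin n → ℝ)} (hΩ : IsOpen Ω) (h : Set.EqOn f g Ω) (i : Fin n) :
    Set.EqOn (pd i f) (pd i g) Ω := fun x hx =>
  pd_congr_nhds (Filter.eventuallyEq_of_mem (hΩ.mem_nhds hx) h) i

lemma pd_add (hf : DifferentiableAt ℝ f x) (hg : DifferentiableAt ℝ g x) (i : Fin n) :
    pd i (fun y => f y + g y) x = pd i f x + pd i g x := by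
  unfold pd; rw [fderiv_fun_add hf hg]; rfl

lemma pd_sub (hf : DifferentiableAt ℝ f x) (hg : DifferentiableAt ℝ g x) (i : Fin n) :
    pd i (fun y => f y - g y) x = pd i f x - pd i g x := by
  unfold pd; rw [fderiv_fun_sub hf hg]; rfl

lemma pd_const_mul (hf : DifferentiableAt ℝ f x) (c : ℝ) (i : Fin n) :
    pd i (fun y => c * f y) x = c * pd i f x := by
  unfold pd; rw [fderiv_const_mul hf c]; rfl

lemma pd_mul (hf : DifferentiableAt ℝ f x) (hg : DifferentiableAt ℝ g x) (i : Fin n) :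
    pd i (fun y => f y * g y) x = pd i f x * g x + f x * pd i g x := by
  unfold pd; rw [fderiv_fun_mul hf hg]; simp; ring

lemma pd_sum {ι : Type*} [Fintype ι] {F : ι → (Fin n → ℝ) → ℝ}
    (hF : ∀ k, DifferentiableAt ℝ (F k) x) (i : Fin n) :
    pd i (fun y => ∑ k, F k y) x = ∑ k, pd i (F k) x := by
  unfold pd; rw [fderiv_fun_sum (fun k _ => hF k)]; simp

lemma pd_smul_comp (c : ℝ) (hv : Differentiable ℝ f) (i : Fin n) (x : Fin n → ℝ) :
    pd i (fun y => f (c • y)) x = c * pd i f (c • x) := by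
  unfold pd
  have h1 : (fun y => f (c • y)) = f ∘ (c • ContinuousLinearMap.id ℝ (Fin n → ℝ)) := rfl
  set L := c • ContinuousLinearMap.id ℝ (Fin n → ℝ) with hL
  rw [h1, fderiv_comp x (hv _) L.differentiableAt, L.fderiv]
  simp [hL, _root_.map_smul]

lemma contDiff_pd {m : ℕ} (hf : ContDiff ℝ (m+1 : ℕ) f) (i : Fin n) : ContDiff ℝ m (pd i f) := by
  exact (hf.fderiv_right (m := m) (by norm_cast)).clm_apply
    (contDiff_const (c := Pi.single i 1))

lemma contDiffOn_pd {m : ℕ} {Ω : Set (Fin n → ℝ)} (hΩ : IsOpen Ω)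
    (hf : ContDiffOn ℝ (m+1 : ℕ) f Ω) (i : Fin n) : ContDiffOn ℝ m (pd i f) Ω := by
  exact (hf.fderiv_of_isOpen hΩ (m := m) (by norm_cast)).clm_apply
    (contDiffOn_const (c := Pi.single i 1))

lemma diff_scaled (c : ℝ) (hw : Differentiable ℝ f) :
    Differentiable ℝ (fun y : Fin n → ℝ => f (c • y)) :=
  hw.comp (differentiable_id.const_smul c)

lemma abs_pd_le_gradNorm (f : (Fin n → ℝ) → ℝ) (x : Fin n → ℝ) (i : Fin n) :
    |pd i f x| ≤ gradNorm f x := by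
  unfold gradNorm
  have h : (pd i f x)^2 ≤ ∑ j, (pd j f x)^2 :=
    Finset.single_le_sum (f := fun j => (pd j f x)^2) (fun j _ => sq_nonneg _) (Finset.mem_univ i)
  calc |pd i f x| = Real.sqrt ((pd i f x)^2) := (Real.sqrt_sq_eq_abs _).symm
  _ ≤ _ := Real.sqrt_le_sqrt h

lemma gradNorm_nonneg (f : (Fin n → ℝ) → ℝ) (x : Fin n → ℝ) : 0 ≤ gradNorm f x :=
  Real.sqrt_nonneg _

lemma gradNorm_le_of_bound {K : ℝ} (hK : 0 ≤ K) (h : ∀ i, |pd i f x| ≤ K) :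
    gradNorm f x ≤ Real.sqrt n * K := by
  unfold gradNorm
  have h1 : ∑ i, (pd i f x)^2 ≤ ∑ _i : Fin n, K^2 := Finset.sum_le_sum fun i _ => by
    rw [← sq_abs]; exact pow_le_pow_left₀ (abs_nonneg _) (h i) 2
  have h2 : (∑ _i : Fin n, K^2) = (n : ℝ) * K^2 := by simp [Finset.sum_const]
  calc Real.sqrt (∑ i, (pd i f x)^2) ≤ Real.sqrt ((n:ℝ) * K^2) := by
        apply Real.sqrt_le_sqrt; rw [← h2]; exact h1
  _ = Real.sqrt n * K := by
        rw [Real.sqrt_mul (by positivity), Real.sqrt_sq hK]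

lemma gradNorm_euc (f : (Fin n → ℝ) → ℝ) (x : Fin n → ℝ) :
    gradNorm f x = ‖(WithLp.equiv 2 (Fin n → ℝ)).symm (fun i => pd i f x)‖ := by
  rw [EuclideanSpace.norm_eq]; unfold gradNorm; congr 1
  apply Finset.sum_congr rfl; intro i _
  simp [WithLp.equiv_symm_apply, PiLp.toLp_apply, sq_abs]

lemma gradNorm_add_le (hf : DifferentiableAt ℝ f x) (hg : DifferentiableAt ℝ g x) :
    gradNorm (fun y => f y + g y) x ≤ gradNorm f x + gradNorm g x := by
  rw [gradNorm_euc, gradNorm_euc, gradNorm_euc]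
  have h : (WithLp.equiv 2 (Fin n → ℝ)).symm (fun i => pd i (fun y => f y + g y) x)
      = (WithLp.equiv 2 (Fin n → ℝ)).symm (fun i => pd i f x)
        + (WithLp.equiv 2 (Fin n → ℝ)).symm (fun i => pd i g x) := by
    rw [WithLp.equiv_symm_apply, ← WithLp.toLp_add]
    congr 1
    funext i
    exact pd_add hf hg i
  rw [h]; exact norm_add_le _ _

lemma gradNorm_const_mul (hf : DifferentiableAt ℝ f x) (c : ℝ) :
    gradNorm (fun y => c * f y) x = |c| * gradNorm f x := by
  unfold gradNorm
  have h : ∀ i, pd i (fun y => c * f y) x = c * pd i f x := fun i => pd_const_mul hf c i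
  simp_rw [h, mul_pow, ← Finset.mul_sum]
  rw [Real.sqrt_mul (sq_nonneg c), Real.sqrt_sq_eq_abs]

lemma lpNorm_le_of_bound {q K : ℝ} (hq : 0 < q) {Ω : Set (Fin n → ℝ)} (hΩ : MeasurableSet Ω)
    (hvol : volume Ω < ⊤) (hK : 0 ≤ K) {g : (Fin n → ℝ) → ℝ} (h : ∀ x ∈ Ω, |g x| ≤ K) :
    lpNorm q Ω g ≤ K * ((volume Ω).toReal) ^ (1/q) := by
  unfold _root_.lpNorm
  have h0 : (0:ℝ) ≤ ∫ x in Ω, |g x| ^ q :=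
    setIntegral_nonneg hΩ fun x _ => Real.rpow_nonneg (abs_nonneg _) q
  have hle : (∫ x in Ω, |g x| ^ q) ≤ K^q * (volume Ω).toReal := by
    by_cases hint : IntegrableOn (fun x => |g x| ^ q) Ω volume
    · have hmono := setIntegral_mono_on hint
        (integrableOn_const hvol.ne) hΩ
        (fun x hx => Real.rpow_le_rpow (abs_nonneg _) (h x hx) hq.le)
      calc (∫ x in Ω, |g x| ^ q) ≤ ∫ _x in Ω, K^q := hmono
      _ = K^q * (volume Ω).toReal := by rw [setIntegral_const]; rw [smul_eq_mul]; rw [measureReal_def]; ring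
    · rw [integral_undef hint]; positivity
  calc (∫ x in Ω, |g x|^q)^(1/q) ≤ (K^q * (volume Ω).toReal)^(1/q) :=
        Real.rpow_le_rpow h0 hle (by positivity)
  _ = K * ((volume Ω).toReal)^(1/q) := by
      rw [Real.mul_rpow (Real.rpow_nonneg hK q) ENNReal.toReal_nonneg,
        ← Real.rpow_mul hK, mul_one_div_cancel hq.ne', Real.rpow_one]

lemma abs_sum_le_card_mul {ι : Type*} [Fintype ι] {f : ι → ℝ} {K : ℝ}
    (h : ∀ k, |f k| ≤ K) : |∑ k, f k| ≤ (Fintype.card ι : ℝ) * K := by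
  calc |∑ k, f k| ≤ ∑ k, |f k| := Finset.abs_sum_le_sum_abs _ _
  _ ≤ ∑ _k : ι, K := Finset.sum_le_sum fun k _ => h k
  _ = (Fintype.card ι : ℝ) * K := by simp [Finset.sum_const]

/-- the master lemma for sums of scaled-corrector products -/
lemma master {ι : Type*} [Fintype ι] (c : ℝ) (w φ : ι → (Fin n → ℝ) → ℝ)
    {Ω : Set (Fin n → ℝ)} (hΩo : IsOpen Ω) (hw : ∀ k, ContDiff ℝ 2 (w k))
    (hφ : ∀ k, ContDiffOn ℝ 2 (φ k) Ω) :
    DifferentiableOn ℝ (fun y => ∑ k, w k (c • y) * φ k y) Ω ∧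
    (∀ j, DifferentiableOn ℝ (pd j (fun y => ∑ k, w k (c • y) * φ k y)) Ω) ∧
    (∀ j x, x ∈ Ω → pd j (fun y => ∑ k, w k (c • y) * φ k y) x
        = ∑ k, (c * pd j (w k) (c • x) * φ k x + w k (c • x) * pd j (φ k) x)) ∧
    (∀ i j x, x ∈ Ω → pd i (pd j (fun y => ∑ k, w k (c • y) * φ k y)) x
        = ∑ k, (c * (c * pd i (pd j (w k)) (c • x)) * φ k x
            + c * pd j (w k) (c • x) * pd i (φ k) x
            + (c * pd i (w k) (c • x) * pd j (φ k) x
              + w k (c • x) * pd i (pd j (φ k)) x))) := by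
  have hwd : ∀ k, Differentiable ℝ (w k) := fun k => (hw k).differentiable (by norm_cast)
  have hw1 : ∀ k a, Differentiable ℝ (pd a (w k)) := fun k a =>
    (contDiff_pd (m := 1) (by exact_mod_cast hw k) a).differentiable (by norm_cast)
  have hφd : ∀ k, DifferentiableOn ℝ (φ k) Ω := fun k => (hφ k).differentiableOn (by norm_cast)
  have hφ1 : ∀ k a, DifferentiableOn ℝ (pd a (φ k)) Ω := fun k a =>
    (contDiffOn_pd (m := 1) hΩo (by exact_mod_cast hφ k) a).differentiableOn (by norm_cast)
  have hφat : ∀ k x, x ∈ Ω → DifferentiableAt ℝ (φ k) x := fun k x hx =>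
    (hφd k x hx).differentiableAt (hΩo.mem_nhds hx)
  have hφ1at : ∀ k a x, x ∈ Ω → DifferentiableAt ℝ (pd a (φ k)) x := fun k a x hx =>
    (hφ1 k a x hx).differentiableAt (hΩo.mem_nhds hx)
  -- differentiability of each term
  have hterm : ∀ k, DifferentiableOn ℝ (fun y => w k (c • y) * φ k y) Ω := fun k =>
    ((diff_scaled c (hwd k)).differentiableOn).mul (hφd k)
  have htermAt : ∀ k x, x ∈ Ω → DifferentiableAt ℝ (fun y => w k (c • y) * φ k y) x :=
    fun k x hx => ((diff_scaled c (hwd k)) x).mul (hφat k x hx)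
  -- first derivative formula
  have h3 : ∀ j x, x ∈ Ω → pd j (fun y => ∑ k, w k (c • y) * φ k y) x
      = ∑ k, (c * pd j (w k) (c • x) * φ k x + w k (c • x) * pd j (φ k) x) := by
    intro j x hx
    rw [pd_sum (fun k => htermAt k x hx) j]
    apply Finset.sum_congr rfl
    intro k _
    rw [pd_mul ((diff_scaled c (hwd k)) x) (hφat k x hx) j, pd_smul_comp c (hwd k) j x]
  have hDsum : DifferentiableOn ℝ (fun y => ∑ k, w k (c • y) * φ k y) Ω := by
    apply DifferentiableOn.fun_sum (fun k _ => hterm k)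
  -- formula function is differentiable
  have hFdiff : ∀ j, DifferentiableOn ℝ
      (fun x => ∑ k, (c * pd j (w k) (c • x) * φ k x + w k (c • x) * pd j (φ k) x)) Ω := by
    intro j
    apply DifferentiableOn.fun_sum
    intro k _
    apply DifferentiableOn.add
    · exact (((diff_scaled c (hw1 k j)).const_mul c).differentiableOn).mul (hφd k)
    · exact ((diff_scaled c (hwd k)).differentiableOn).mul (hφ1 k j)
  have h2 : ∀ j, DifferentiableOn ℝ (pd j (fun y => ∑ k, w k (c • y) * φ k y)) Ω := by
    intro j
    exact (hFdiff j).congr (h3 j)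
  refine ⟨hDsum, h2, h3, ?_⟩
  intro i j x hx
  rw [pd_eqOn hΩo (fun y hy => h3 j y hy) i hx]
  have hA : ∀ k, DifferentiableAt ℝ (fun y => c * pd j (w k) (c • y) * φ k y) x := fun k =>
    (((diff_scaled c (hw1 k j)) x).const_mul c).mul (hφat k x hx)
  have hB : ∀ k, DifferentiableAt ℝ (fun y => w k (c • y) * pd j (φ k) y) x := fun k =>
    ((diff_scaled c (hwd k)) x).mul (hφ1at k j x hx)
  rw [pd_sum (fun k => (hA k).fun_add (hB k)) i]
  apply Finset.sum_congr rfl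
  intro k _
  rw [pd_add (hA k) (hB k) i]
  congr 1
  · rw [pd_mul (((diff_scaled c (hw1 k j)) x).const_mul c) (hφat k x hx) i,
      pd_const_mul ((diff_scaled c (hw1 k j)) x) c i, pd_smul_comp c (hw1 k j) i x]
  · rw [pd_mul ((diff_scaled c (hwd k)) x) (hφ1at k j x hx) i, pd_smul_comp c (hwd k) i x]

section SumHelpers
variable {α β γ δ σ : Type*} [Fintype α] [Fintype β] [Fintype γ] [Fintype δ] [Fintype σ]

lemma pull3 (f : α → β → γ → ℝ) :
    ∑ a, ∑ b, ∑ c, f a b c = ∑ c, ∑ a, ∑ b, f a b c := by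
  calc ∑ a, ∑ b, ∑ c, f a b c = ∑ a, ∑ c, ∑ b, f a b c :=
        Finset.sum_congr rfl fun a _ => Finset.sum_comm
  _ = ∑ c, ∑ a, ∑ b, f a b c := Finset.sum_comm

lemma pull4 (f : α → β → γ → δ → ℝ) :
    ∑ a, ∑ b, ∑ c, ∑ d, f a b c d = ∑ d, ∑ a, ∑ b, ∑ c, f a b c d := by
  calc ∑ a, ∑ b, ∑ c, ∑ d, f a b c d = ∑ a, ∑ d, ∑ b, ∑ c, f a b c d :=
        Finset.sum_congr rfl fun a _ => pull3 _
  _ = ∑ d, ∑ a, ∑ b, ∑ c, f a b c d := Finset.sum_comm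

lemma pull5 (f : α → β → γ → δ → σ → ℝ) :
    ∑ a, ∑ b, ∑ c, ∑ d, ∑ e, f a b c d e = ∑ e, ∑ a, ∑ b, ∑ c, ∑ d, f a b c d e := by
  calc ∑ a, ∑ b, ∑ c, ∑ d, ∑ e, f a b c d e = ∑ a, ∑ e, ∑ b, ∑ c, ∑ d, f a b c d e :=
        Finset.sum_congr rfl fun a _ => pull4 _
  _ = _ := Finset.sum_comm

lemma swap34 (f : α → β → γ → δ → ℝ) :
    ∑ a, ∑ b, ∑ c, ∑ d, f a b c d = ∑ c, ∑ d, ∑ a, ∑ b, f a b c d := by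
  calc ∑ a, ∑ b, ∑ c, ∑ d, f a b c d = ∑ d, ∑ a, ∑ b, ∑ c, f a b c d := pull4 _
  _ = ∑ c, ∑ d, ∑ a, ∑ b, f a b c d := pull4 (fun d a b c => f a b c d)

lemma swap25 (f : α → β → γ → δ → σ → ℝ) :
    ∑ a, ∑ b, ∑ c, ∑ d, ∑ e, f a b c d e = ∑ c, ∑ d, ∑ e, ∑ a, ∑ b, f a b c d e := by
  calc ∑ a, ∑ b, ∑ c, ∑ d, ∑ e, f a b c d e
      = ∑ e, ∑ a, ∑ b, ∑ c, ∑ d, f a b c d e := pull5 _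
  _ = ∑ d, ∑ e, ∑ a, ∑ b, ∑ c, f a b c d e := pull5 (fun e a b c d => f a b c d e)
  _ = ∑ c, ∑ d, ∑ e, ∑ a, ∑ b, f a b c d e := pull5 (fun d e a b c => f a b c d e)

end SumHelpers

section AbsSum
variable {n : ℕ}

lemma abs_sum1 {K : ℝ} {f : Fin n → ℝ} (h : ∀ i, |f i| ≤ K) : |∑ i, f i| ≤ (n:ℝ) * K := by
  simpa using abs_sum_le_card_mul h

lemma abs_sum2 {K : ℝ} {f : Fin n → Fin n → ℝ} (h : ∀ i j, |f i j| ≤ K) (hK : 0 ≤ K) :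
    |∑ i, ∑ j, f i j| ≤ (n:ℝ)^2 * K := by
  have := abs_sum1 (f := fun i => ∑ j, f i j) (fun i => abs_sum1 (h i))
  calc |∑ i, ∑ j, f i j| ≤ (n:ℝ) * ((n:ℝ) * K) := this
  _ = (n:ℝ)^2 * K := by ring

lemma abs_sum3 {K : ℝ} {f : Fin n → Fin n → Fin n → ℝ} (h : ∀ i j k, |f i j k| ≤ K)
    (hK : 0 ≤ K) : |∑ i, ∑ j, ∑ k, f i j k| ≤ (n:ℝ)^3 * K := by
  have := abs_sum1 (f := fun i => ∑ j, ∑ k, f i j k)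
    (fun i => abs_sum2 (h i) hK)
  calc |∑ i, ∑ j, ∑ k, f i j k| ≤ (n:ℝ) * ((n:ℝ)^2 * K) := this
  _ = (n:ℝ)^3 * K := by ring

lemma abs_sum4 {K : ℝ} {f : Fin n → Fin n → Fin n → Fin n → ℝ}
    (h : ∀ i j k l, |f i j k l| ≤ K) (hK : 0 ≤ K) :
    |∑ i, ∑ j, ∑ k, ∑ l, f i j k l| ≤ (n:ℝ)^4 * K := by
  have := abs_sum1 (f := fun i => ∑ j, ∑ k, ∑ l, f i j k l)
    (fun i => abs_sum3 (h i) hK)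
  calc |∑ i, ∑ j, ∑ k, ∑ l, f i j k l| ≤ (n:ℝ) * ((n:ℝ)^3 * K) := this
  _ = (n:ℝ)^4 * K := by ring

lemma abs_sum5 {K : ℝ} {f : Fin n → Fin n → Fin n → Fin n → Fin n → ℝ}
    (h : ∀ i j k l m, |f i j k l m| ≤ K) (hK : 0 ≤ K) :
    |∑ i, ∑ j, ∑ k, ∑ l, ∑ m, f i j k l m| ≤ (n:ℝ)^5 * K := by
  have := abs_sum1 (f := fun i => ∑ j, ∑ k, ∑ l, ∑ m, f i j k l m)
    (fun i => abs_sum4 (h i) hK)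
  calc |∑ i, ∑ j, ∑ k, ∑ l, ∑ m, f i j k l m| ≤ (n:ℝ) * ((n:ℝ)^4 * K) := this
  _ = (n:ℝ)^5 * K := by ring

end AbsSum

/-- double-sum version of the master lemma -/
lemma masterD {n : ℕ} (c : ℝ) (w φ : Fin n → Fin n → (Fin n → ℝ) → ℝ)
    {Ω : Set (Fin n → ℝ)} (hΩo : IsOpen Ω) (hw : ∀ k l, ContDiff ℝ 2 (w k l))
    (hφ : ∀ k l, ContDiffOn ℝ 2 (φ k l) Ω) :
    DifferentiableOn ℝ (fun y => ∑ k, ∑ l, w k l (c • y) * φ k l y) Ω ∧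
    (∀ j, DifferentiableOn ℝ (pd j (fun y => ∑ k, ∑ l, w k l (c • y) * φ k l y)) Ω) ∧
    (∀ j x, x ∈ Ω → pd j (fun y => ∑ k, ∑ l, w k l (c • y) * φ k l y) x
        = ∑ k, ∑ l, (c * pd j (w k l) (c • x) * φ k l x + w k l (c • x) * pd j (φ k l) x)) ∧
    (∀ i j x, x ∈ Ω → pd i (pd j (fun y => ∑ k, ∑ l, w k l (c • y) * φ k l y)) x
        = ∑ k, ∑ l, (c * (c * pd i (pd j (w k l)) (c • x)) * φ k l x
            + c * pd j (w k l) (c • x) * pd i (φ k l) x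
            + (c * pd i (w k l) (c • x) * pd j (φ k l) x
              + w k l (c • x) * pd i (pd j (φ k l)) x))) := by
  have key := master c (fun p : Fin n × Fin n => w p.1 p.2) (fun p => φ p.1 p.2) hΩo
    (fun p => hw p.1 p.2) (fun p => hφ p.1 p.2)
  have hfun : (fun y => ∑ k, ∑ l, w k l (c • y) * φ k l y)
      = (fun y => ∑ p : Fin n × Fin n, w p.1 p.2 (c • y) * φ p.1 p.2 y) :=
    funext fun y => by rw [Fintype.sum_prod_type]
  rw [hfun]
  refine ⟨key.1, key.2.1, fun j x hx => ?_, fun i j x hx => ?_⟩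
  · rw [key.2.2.1 j x hx, Fintype.sum_prod_type]
  · rw [key.2.2.2 i j x hx, Fintype.sum_prod_type]

/-- triple-sum version of the master lemma -/
lemma masterT {n : ℕ} (c : ℝ) (w φ : Fin n → Fin n → Fin n → (Fin n → ℝ) → ℝ)
    {Ω : Set (Fin n → ℝ)} (hΩo : IsOpen Ω) (hw : ∀ j k l, ContDiff ℝ 2 (w j k l))
    (hφ : ∀ j k l, ContDiffOn ℝ 2 (φ j k l) Ω) :
    DifferentiableOn ℝ (fun y => ∑ a, ∑ k, ∑ l, w a k l (c • y) * φ a k l y) Ω ∧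
    (∀ j, DifferentiableOn ℝ (pd j (fun y => ∑ a, ∑ k, ∑ l, w a k l (c • y) * φ a k l y)) Ω) ∧
    (∀ j x, x ∈ Ω → pd j (fun y => ∑ a, ∑ k, ∑ l, w a k l (c • y) * φ a k l y) x
        = ∑ a, ∑ k, ∑ l, (c * pd j (w a k l) (c • x) * φ a k l x
            + w a k l (c • x) * pd j (φ a k l) x)) ∧
    (∀ i j x, x ∈ Ω → pd i (pd j (fun y => ∑ a, ∑ k, ∑ l, w a k l (c • y) * φ a k l y)) x
        = ∑ a, ∑ k, ∑ l, (c * (c * pd i (pd j (w a k l)) (c • x)) * φ a k l x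
            + c * pd j (w a k l) (c • x) * pd i (φ a k l) x
            + (c * pd i (w a k l) (c • x) * pd j (φ a k l) x
              + w a k l (c • x) * pd i (pd j (φ a k l)) x))) := by
  have key := master c (fun p : Fin n × Fin n × Fin n => w p.1 p.2.1 p.2.2)
    (fun p => φ p.1 p.2.1 p.2.2) hΩo (fun p => hw p.1 p.2.1 p.2.2) (fun p => hφ p.1 p.2.1 p.2.2)
  have hfun : (fun y => ∑ a, ∑ k, ∑ l, w a k l (c • y) * φ a k l y)
      = (fun y => ∑ p : Fin n × Fin n × Fin n, w p.1 p.2.1 p.2.2 (c • y) * φ p.1 p.2.1 p.2.2 y) := by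
    funext y
    rw [Fintype.sum_prod_type]
    exact Finset.sum_congr rfl fun a _ => by rw [Fintype.sum_prod_type]
  rw [hfun]
  refine ⟨key.1, key.2.1, fun j x hx => ?_, fun i j x hx => ?_⟩
  · rw [key.2.2.1 j x hx, Fintype.sum_prod_type]
    exact Finset.sum_congr rfl fun a _ => by rw [Fintype.sum_prod_type]
  · rw [key.2.2.2 i j x hx, Fintype.sum_prod_type]
    exact Finset.sum_congr rfl fun a _ => by rw [Fintype.sum_prod_type]


set_option maxHeartbeats 1600000 in
/-- The key conditional `W^{1,∞}` estimate from the proof of Theorem 1.3: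
`sup_Ω (|Eᵋ| + |∇Eᵋ|) ≤ C ε²` for
`Eᵋ = uᵋ − u + 2εzᵋ − ε² V(·/ε):D²u − ε²θᵋ − 2ε³θ_χᵋ`, assuming the Avellaneda–Lin-type
uniform interior estimate. -/
theorem W1infty_key_estimate {n : ℕ} (hn : 1 ≤ n)
    (q M C₀ : ℝ) (hq : 0 < q) (hM : 0 < M) (hC₀ : 0 < C₀)
    (Ω : Set (Fin n → ℝ)) (hΩb : Bornology.IsBounded Ω) (hΩo : IsOpen Ω)
    (A : (Fin n → ℝ) → Fin n → Fin n → ℝ)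
    (hAsymm : ∀ y i j, A y i j = A y j i)
    (hAbd : ∀ y i j, |A y i j| ≤ M)
    (Abar : Fin n → Fin n → ℝ) (hAbarSymm : ∀ i j, Abar i j = Abar j i)
    (f : (Fin n → ℝ) → ℝ)
    (u : (Fin n → ℝ) → ℝ)
    (v : Fin n → Fin n → (Fin n → ℝ) → ℝ)
    (c : Fin n → Fin n → Fin n → ℝ)
    (χ : Fin n → Fin n → Fin n → (Fin n → ℝ) → ℝ)
    (uε θε θχε wε zε : ℝ → (Fin n → ℝ) → ℝ)
    -- u solves the homogenized problem, with all derivatives up to order 5 bounded by M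
    (hu : ContDiffOn ℝ 5 u Ω)
    (hueq : ∀ x ∈ Ω, -(∑ i, ∑ j, Abar i j * pd i (pd j u) x) = f x)
    (hubd : ∀ x ∈ Ω, ∀ i j k l d : Fin n,
      |u x| ≤ M ∧ |pd i u x| ≤ M ∧ |pd i (pd j u) x| ≤ M ∧
      |pd i (pd j (pd k u)) x| ≤ M ∧ |pd i (pd j (pd k (pd l u))) x| ≤ M ∧
      |pd i (pd j (pd k (pd l (pd d u)))) x| ≤ M)
    -- correctors v^{kl}
    (hv : ∀ k l, ContDiff ℝ 2 (v k l))
    (hveq : ∀ k l, ∀ y : Fin n → ℝ,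
      -(∑ i, ∑ j, A y i j * pd i (pd j (v k l)) y) = A y k l - Abar k l)
    (hvbd : ∀ k l, ∀ y : Fin n → ℝ, |v k l y| + gradNorm (v k l) y ≤ M)
    -- correctors χ^{jkl}
    (hχ : ∀ j k l, ContDiff ℝ 2 (χ j k l))
    (hχeq : ∀ j k l, ∀ y : Fin n → ℝ,
      -(∑ i, ∑ i', A y i i' * pd i (pd i' (χ j k l)) y)
        = (∑ i, A y i j * pd i (v k l) y) - c j k l)
    (hχbd : ∀ j k l, ∀ y : Fin n → ℝ, |χ j k l y| + gradNorm (χ j k l) y ≤ M)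
    -- the ε-problems
    (huε : ∀ ε ∈ Set.Ioc (0:ℝ) 1, TwiceDiffOn (uε ε) Ω)
    (huεeq : ∀ ε ∈ Set.Ioc (0:ℝ) 1, ∀ x ∈ Ω,
      -(∑ i, ∑ j, A (ε⁻¹ • x) i j * pd i (pd j (uε ε)) x) = f x)
    (hθ : ∀ ε ∈ Set.Ioc (0:ℝ) 1, TwiceDiffOn (θε ε) Ω)
    (hθeq : ∀ ε ∈ Set.Ioc (0:ℝ) 1, ∀ x ∈ Ω,
      (∑ i, ∑ j, A (ε⁻¹ • x) i j * pd i (pd j (θε ε)) x) = 0)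
    (hθχ : ∀ ε ∈ Set.Ioc (0:ℝ) 1, TwiceDiffOn (θχε ε) Ω)
    (hθχeq : ∀ ε ∈ Set.Ioc (0:ℝ) 1, ∀ x ∈ Ω,
      (∑ i, ∑ j, A (ε⁻¹ • x) i j * pd i (pd j (θχε ε)) x) = 0)
    (hw : ∀ ε ∈ Set.Ioc (0:ℝ) 1, TwiceDiffOn (wε ε) Ω)
    (hweq : ∀ ε ∈ Set.Ioc (0:ℝ) 1, ∀ x ∈ Ω,
      -(∑ i, ∑ j, A (ε⁻¹ • x) i j * pd i (pd j (wε ε)) x)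
        = ∑ i, ∑ j, ∑ k, ∑ l,
            A (ε⁻¹ • x) i j * pd i (v k l) (ε⁻¹ • x) * pd j (pd k (pd l u)) x)
    (hz : ∀ ε ∈ Set.Ioc (0:ℝ) 1, TwiceDiffOn (zε ε) Ω)
    (hzeq : ∀ ε ∈ Set.Ioc (0:ℝ) 1, ∀ x ∈ Ω,
      -(∑ i, ∑ j, A (ε⁻¹ • x) i j * pd i (pd j (zε ε)) x)
        = -(∑ j, ∑ k, ∑ l, c j k l * pd j (pd k (pd l u)) x))
    -- the uniform interior (Avellaneda–Lin) estimate
    (hAL : ∀ ε ∈ Set.Ioc (0:ℝ) 1, ∀ w : (Fin n → ℝ) → ℝ,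
      TwiceDiffOn w Ω → ContinuousOn w (closure Ω) →
      (∀ x ∈ frontier Ω, w x = 0) →
      ∀ x ∈ Ω, |w x| + gradNorm w x
        ≤ C₀ * lpNorm q Ω (fun y => ∑ i, ∑ j, A (ε⁻¹ • y) i j * pd i (pd j w) y))
    -- the two corrected functions extend continuously to the closure and vanish on ∂Ω
    (hbc₁ : ∀ ε ∈ Set.Ioc (0:ℝ) 1,
      ContinuousOn (fun x => uε ε x - u x -
        ε ^ 2 * ((∑ k, ∑ l, v k l (ε⁻¹ • x) * pd k (pd l u) x) + θε ε x)
        - 2 * ε * wε ε x) (closure Ω) ∧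
      ∀ x ∈ frontier Ω, uε ε x - u x -
        ε ^ 2 * ((∑ k, ∑ l, v k l (ε⁻¹ • x) * pd k (pd l u) x) + θε ε x)
        - 2 * ε * wε ε x = 0)
    (hbc₂ : ∀ ε ∈ Set.Ioc (0:ℝ) 1,
      ContinuousOn (fun x => wε ε x + zε ε x -
        ε ^ 2 * ((∑ j, ∑ k, ∑ l, χ j k l (ε⁻¹ • x) * pd j (pd k (pd l u)) x)
          + θχε ε x)) (closure Ω) ∧
      ∀ x ∈ frontier Ω, wε ε x + zε ε x -
        ε ^ 2 * ((∑ j, ∑ k, ∑ l, χ j k l (ε⁻¹ • x) * pd j (pd k (pd l u)) x)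
          + θχε ε x) = 0) :
    ∃ C > 0, ∃ ε₀ ∈ Set.Ioc (0:ℝ) 1, ∀ ε ∈ Set.Ioo (0:ℝ) ε₀, ∀ x ∈ Ω,
      |uε ε x - u x + 2 * ε * zε ε x
          - ε ^ 2 * (∑ k, ∑ l, v k l (ε⁻¹ • x) * pd k (pd l u) x)
          - ε ^ 2 * θε ε x - 2 * ε ^ 3 * θχε ε x|
        + gradNorm (fun y => uε ε y - u y + 2 * ε * zε ε y
          - ε ^ 2 * (∑ k, ∑ l, v k l (ε⁻¹ • y) * pd k (pd l u) y)
          - ε ^ 2 * θε ε y - 2 * ε ^ 3 * θχε ε y) x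
        ≤ C * ε ^ 2 := by
  classical
  have hΩm : MeasurableSet Ω := hΩo.measurableSet
  have hvol : volume Ω < ⊤ := hΩb.measure_lt_top
  set Vq : ℝ := ((volume Ω).toReal) ^ (1/q) with hVqdef
  have hVq : 0 ≤ Vq := Real.rpow_nonneg ENNReal.toReal_nonneg _
  have hn1 : (1:ℝ) ≤ (n:ℝ) := by exact_mod_cast hn
  refine ⟨C₀ * Vq * ((n:ℝ)^4 * M^3 + 2 * (3*(n:ℝ)^5*M^3)) + 6*(n:ℝ)^4*M^2 + 1,
    by positivity, 1, ⟨zero_lt_one, le_refl 1⟩, ?_⟩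
  intro ε hεIoo x hx
  have hε : ε ∈ Set.Ioc (0:ℝ) 1 := ⟨hεIoo.1, hεIoo.2.le⟩
  have hε0 : (0:ℝ) < ε := hε.1
  have hε1 : ε ≤ 1 := hε.2
  have hεne : ε ≠ 0 := ne_of_gt hε0
  -- differentiability at points
  have dAt : ∀ {h : (Fin n → ℝ) → ℝ} {x' : Fin n → ℝ}, DifferentiableOn ℝ h Ω → x' ∈ Ω →
      DifferentiableAt ℝ h x' := fun hd hx' => (hd _ hx').differentiableAt (hΩo.mem_nhds hx')
  -- regularity chain for u
  have hu5 : ContDiffOn ℝ ((4:ℕ)+1) u Ω := by exact_mod_cast hu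
  have hu1 : ∀ l, ContDiffOn ℝ ((3:ℕ)+1) (pd l u) Ω := fun l => by
    exact_mod_cast contDiffOn_pd hΩo hu5 l
  have hu2 : ∀ k l, ContDiffOn ℝ ((2:ℕ)+1) (pd k (pd l u)) Ω := fun k l => by
    exact_mod_cast contDiffOn_pd hΩo (hu1 l) k
  have hu3 : ∀ j k l, ContDiffOn ℝ ((1:ℕ)+1) (pd j (pd k (pd l u))) Ω := fun j k l => by
    exact_mod_cast contDiffOn_pd hΩo (hu2 k l) j
  have duO : DifferentiableOn ℝ u Ω := hu.differentiableOn (by norm_num)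
  have du1O : ∀ l, DifferentiableOn ℝ (pd l u) Ω := fun l =>
    (hu1 l).differentiableOn (by norm_num)
  -- bounds from hubd
  have hub2 : ∀ x', x' ∈ Ω → ∀ k l, |pd k (pd l u) x'| ≤ M :=
    fun x' hx' k l => (hubd x' hx' k l k k k).2.2.1
  have hub3 : ∀ x', x' ∈ Ω → ∀ j k l, |pd j (pd k (pd l u)) x'| ≤ M :=
    fun x' hx' j k l => (hubd x' hx' j k l l l).2.2.2.1
  have hub4 : ∀ x', x' ∈ Ω → ∀ i j k l, |pd i (pd j (pd k (pd l u))) x'| ≤ M :=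
    fun x' hx' i j k l => (hubd x' hx' i j k l l).2.2.2.2.1
  have hub5 : ∀ x', x' ∈ Ω → ∀ i i' j k l, |pd i (pd i' (pd j (pd k (pd l u)))) x'| ≤ M :=
    fun x' hx' i i' j k l => (hubd x' hx' i i' j k l).2.2.2.2.2
  -- bounds for v, χ
  have hvb : ∀ k l y, |v k l y| ≤ M := fun k l y =>
    le_trans (le_add_of_nonneg_right (gradNorm_nonneg _ _)) (hvbd k l y)
  have hv1b : ∀ j k l y, |pd j (v k l) y| ≤ M := fun j k l y =>
    le_trans (abs_pd_le_gradNorm _ _ _)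
      (le_trans (le_add_of_nonneg_left (abs_nonneg _)) (hvbd k l y))
  have hχb : ∀ a k l y, |χ a k l y| ≤ M := fun a k l y =>
    le_trans (le_add_of_nonneg_right (gradNorm_nonneg _ _)) (hχbd a k l y)
  have hχ1b : ∀ j a k l y, |pd j (χ a k l) y| ≤ M := fun j a k l y =>
    le_trans (abs_pd_le_gradNorm _ _ _)
      (le_trans (le_add_of_nonneg_left (abs_nonneg _)) (hχbd a k l y))
  -- master lemmas for the corrector sums
  obtain ⟨hVdO, hVd1O, hV1, hV2⟩ := masterD ε⁻¹ v (fun k l => pd k (pd l u)) hΩo hv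
    (fun k l => (hu2 k l).of_le (by norm_cast))
  obtain ⟨hXdO, hXd1O, hX1, hX2⟩ := masterT ε⁻¹ χ (fun a k l => pd a (pd k (pd l u))) hΩo hχ
    (fun a k l => (hu3 a k l).of_le (by norm_cast))
  -- the two boundary-corrected functions
  have dUε := (huε ε hε).1
  have dUε1 := (huε ε hε).2
  have dθO := (hθ ε hε).1
  have dθ1 := (hθ ε hε).2
  have dθχO := (hθχ ε hε).1
  have dθχ1 := (hθχ ε hε).2
  have dWO := (hw ε hε).1
  have dW1 := (hw ε hε).2
  have dZO := (hz ε hε).1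
  have dZ1 := (hz ε hε).2
  -- first-derivative formula for T1
  have hpdT1 : ∀ j, Set.EqOn
      (pd j (fun x' => uε ε x' - u x' -
        ε ^ 2 * ((∑ k, ∑ l, v k l (ε⁻¹ • x') * pd k (pd l u) x') + θε ε x') - 2 * ε * wε ε x'))
      (fun x' => pd j (uε ε) x' - pd j u x' -
        ε ^ 2 * (pd j (fun y => ∑ k, ∑ l, v k l (ε⁻¹ • y) * pd k (pd l u) y) x' + pd j (θε ε) x')
        - 2 * ε * pd j (wε ε) x') Ω := by
    intro j x' hx'
    have d1 : DifferentiableAt ℝ (uε ε) x' := dAt dUε hx'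
    have d2 : DifferentiableAt ℝ u x' := dAt duO hx'
    have d3 : DifferentiableAt ℝ (fun y => ∑ k, ∑ l, v k l (ε⁻¹ • y) * pd k (pd l u) y) x' :=
      dAt hVdO hx'
    have d4 : DifferentiableAt ℝ (θε ε) x' := dAt dθO hx'
    have d5 : DifferentiableAt ℝ (wε ε) x' := dAt dWO hx'
    rw [pd_sub ((d1.fun_sub d2).fun_sub ((d3.fun_add d4).const_mul (ε^2))) (d5.const_mul (2*ε)) j,
      pd_sub (d1.fun_sub d2) ((d3.fun_add d4).const_mul (ε^2)) j,
      pd_sub d1 d2 j,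
      pd_const_mul (d3.fun_add d4) (ε^2) j,
      pd_add d3 d4 j,
      pd_const_mul d5 (2*ε) j]
  -- T1 is twice differentiable
  have hT1diff : TwiceDiffOn (fun x' => uε ε x' - u x' -
      ε ^ 2 * ((∑ k, ∑ l, v k l (ε⁻¹ • x') * pd k (pd l u) x') + θε ε x') - 2 * ε * wε ε x') Ω := by
    constructor
    · exact ((dUε.sub duO).sub ((hVdO.add dθO).const_mul (ε^2))).sub (dWO.const_mul (2*ε))
    · intro j
      apply DifferentiableOn.congr
        (f := fun x' => pd j (uε ε) x' - pd j u x' -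
          ε ^ 2 * (pd j (fun y => ∑ k, ∑ l, v k l (ε⁻¹ • y) * pd k (pd l u) y) x' + pd j (θε ε) x')
          - 2 * ε * pd j (wε ε) x')
      · exact (((dUε1 j).sub (du1O j)).sub
          (((hVd1O j).add (dθ1 j)).const_mul (ε^2))).sub ((dW1 j).const_mul (2*ε))
      · exact fun x' hx' => hpdT1 j hx'
  -- second-derivative formula for T1
  have hpd2T1 : ∀ i j, ∀ x', x' ∈ Ω → pd i (pd j (fun x' => uε ε x' - u x' -
        ε ^ 2 * ((∑ k, ∑ l, v k l (ε⁻¹ • x') * pd k (pd l u) x') + θε ε x') - 2 * ε * wε ε x')) x'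
      = pd i (pd j (uε ε)) x' - pd i (pd j u) x' -
        ε ^ 2 * (pd i (pd j (fun y => ∑ k, ∑ l, v k l (ε⁻¹ • y) * pd k (pd l u) y)) x'
          + pd i (pd j (θε ε)) x') - 2 * ε * pd i (pd j (wε ε)) x' := by
    intro i j x' hx'
    rw [pd_eqOn hΩo (hpdT1 j) i hx']
    have d1 : DifferentiableAt ℝ (pd j (uε ε)) x' := dAt (dUε1 j) hx'
    have d2 : DifferentiableAt ℝ (pd j u) x' := dAt (du1O j) hx'
    have d3 : DifferentiableAt ℝ (pd j (fun y => ∑ k, ∑ l, v k l (ε⁻¹ • y) * pd k (pd l u) y)) x' :=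
      dAt (hVd1O j) hx'
    have d4 : DifferentiableAt ℝ (pd j (θε ε)) x' := dAt (dθ1 j) hx'
    have d5 : DifferentiableAt ℝ (pd j (wε ε)) x' := dAt (dW1 j) hx'
    rw [pd_sub ((d1.fun_sub d2).fun_sub ((d3.fun_add d4).const_mul (ε^2))) (d5.const_mul (2*ε)) i,
      pd_sub (d1.fun_sub d2) ((d3.fun_add d4).const_mul (ε^2)) i,
      pd_sub d1 d2 i,
      pd_const_mul (d3.fun_add d4) (ε^2) i,
      pd_add d3 d4 i,
      pd_const_mul d5 (2*ε) i]
  -- the PDE identity for T1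
  have hT1pde : ∀ x', x' ∈ Ω →
      (∑ i, ∑ j, A (ε⁻¹ • x') i j * pd i (pd j (fun z => uε ε z - u z -
        ε ^ 2 * ((∑ k, ∑ l, v k l (ε⁻¹ • z) * pd k (pd l u) z) + θε ε z) - 2 * ε * wε ε z)) x')
      = -(ε^2) * (∑ i, ∑ j, ∑ k, ∑ l,
          A (ε⁻¹ • x') i j * v k l (ε⁻¹ • x') * pd i (pd j (pd k (pd l u))) x') := by
    intro x' hx'
    have step1 : (∑ i, ∑ j, A (ε⁻¹ • x') i j * pd i (pd j (fun z => uε ε z - u z -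
        ε ^ 2 * ((∑ k, ∑ l, v k l (ε⁻¹ • z) * pd k (pd l u) z) + θε ε z) - 2 * ε * wε ε z)) x')
        = (∑ i, ∑ j, A (ε⁻¹ • x') i j * pd i (pd j (uε ε)) x')
          - (∑ i, ∑ j, A (ε⁻¹ • x') i j * pd i (pd j u) x')
          - ε^2 * (∑ i, ∑ j, A (ε⁻¹ • x') i j *
              pd i (pd j (fun y => ∑ k, ∑ l, v k l (ε⁻¹ • y) * pd k (pd l u) y)) x')
          - ε^2 * (∑ i, ∑ j, A (ε⁻¹ • x') i j * pd i (pd j (θε ε)) x')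
          - 2*ε * (∑ i, ∑ j, A (ε⁻¹ • x') i j * pd i (pd j (wε ε)) x') := by
      rw [show (∑ i, ∑ j, A (ε⁻¹ • x') i j * pd i (pd j (fun z => uε ε z - u z -
          ε ^ 2 * ((∑ k, ∑ l, v k l (ε⁻¹ • z) * pd k (pd l u) z) + θε ε z) - 2 * ε * wε ε z)) x')
          = ∑ i, ∑ j, (A (ε⁻¹ • x') i j * pd i (pd j (uε ε)) x'
            - A (ε⁻¹ • x') i j * pd i (pd j u) x'
            - ε^2 * (A (ε⁻¹ • x') i j *
                pd i (pd j (fun y => ∑ k, ∑ l, v k l (ε⁻¹ • y) * pd k (pd l u) y)) x')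
            - ε^2 * (A (ε⁻¹ • x') i j * pd i (pd j (θε ε)) x')
            - 2*ε * (A (ε⁻¹ • x') i j * pd i (pd j (wε ε)) x'))
        from Finset.sum_congr rfl fun i _ => Finset.sum_congr rfl fun j _ => by
          rw [hpd2T1 i j x' hx']; ring]
      simp only [Finset.sum_sub_distrib, ← Finset.mul_sum]
    have e1 : (∑ i, ∑ j, A (ε⁻¹ • x') i j * pd i (pd j (uε ε)) x') = -(f x') := by
      have := huεeq ε hε x' hx'; linarith
    have e2 : (∑ i, ∑ j, A (ε⁻¹ • x') i j * pd i (pd j (θε ε)) x') = 0 := hθeq ε hε x' hx'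
    have e3 : (∑ i, ∑ j, A (ε⁻¹ • x') i j * pd i (pd j (wε ε)) x')
        = -(∑ i, ∑ j, ∑ k, ∑ l,
            A (ε⁻¹ • x') i j * pd i (v k l) (ε⁻¹ • x') * pd j (pd k (pd l u)) x') := by
      have := hweq ε hε x' hx'; linarith
    have e4 : ε^2 * (∑ i, ∑ j, A (ε⁻¹ • x') i j *
          pd i (pd j (fun y => ∑ k, ∑ l, v k l (ε⁻¹ • y) * pd k (pd l u) y)) x')
        = (∑ i, ∑ j, ∑ k, ∑ l,
            A (ε⁻¹ • x') i j * pd i (pd j (v k l)) (ε⁻¹ • x') * pd k (pd l u) x')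
          + (ε * (∑ i, ∑ j, ∑ k, ∑ l,
              A (ε⁻¹ • x') i j * pd j (v k l) (ε⁻¹ • x') * pd i (pd k (pd l u)) x')
            + ε * (∑ i, ∑ j, ∑ k, ∑ l,
              A (ε⁻¹ • x') i j * pd i (v k l) (ε⁻¹ • x') * pd j (pd k (pd l u)) x')
            + ε^2 * (∑ i, ∑ j, ∑ k, ∑ l,
              A (ε⁻¹ • x') i j * v k l (ε⁻¹ • x') * pd i (pd j (pd k (pd l u))) x')) := by
      calc ε^2 * (∑ i, ∑ j, A (ε⁻¹ • x') i j *
            pd i (pd j (fun y => ∑ k, ∑ l, v k l (ε⁻¹ • y) * pd k (pd l u) y)) x')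
          = ∑ i, ∑ j, ∑ k, ∑ l,
            (A (ε⁻¹ • x') i j * pd i (pd j (v k l)) (ε⁻¹ • x') * pd k (pd l u) x'
              + (ε * (A (ε⁻¹ • x') i j * pd j (v k l) (ε⁻¹ • x') * pd i (pd k (pd l u)) x')
                + ε * (A (ε⁻¹ • x') i j * pd i (v k l) (ε⁻¹ • x') * pd j (pd k (pd l u)) x')
                + ε^2 * (A (ε⁻¹ • x') i j * v k l (ε⁻¹ • x') *
                    pd i (pd j (pd k (pd l u))) x'))) := by
            rw [Finset.mul_sum]
            refine Finset.sum_congr rfl fun i _ => ?_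
            rw [Finset.mul_sum]
            refine Finset.sum_congr rfl fun j _ => ?_
            rw [hV2 i j x' hx', Finset.mul_sum, Finset.mul_sum]
            refine Finset.sum_congr rfl fun k _ => ?_
            rw [Finset.mul_sum, Finset.mul_sum]
            refine Finset.sum_congr rfl fun l _ => ?_
            field_simp
            ring
      _ = _ := by
            simp only [Finset.sum_add_distrib, ← Finset.mul_sum]
    have e5 : (∑ i, ∑ j, ∑ k, ∑ l,
          A (ε⁻¹ • x') i j * pd i (pd j (v k l)) (ε⁻¹ • x') * pd k (pd l u) x')
        = (∑ k, ∑ l, Abar k l * pd k (pd l u) x')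
          - (∑ k, ∑ l, A (ε⁻¹ • x') k l * pd k (pd l u) x') := by
      rw [swap34 (fun i j k l =>
        A (ε⁻¹ • x') i j * pd i (pd j (v k l)) (ε⁻¹ • x') * pd k (pd l u) x')]
      rw [show (∑ k, ∑ l, ∑ i, ∑ j,
          A (ε⁻¹ • x') i j * pd i (pd j (v k l)) (ε⁻¹ • x') * pd k (pd l u) x')
          = ∑ k, ∑ l, (Abar k l - A (ε⁻¹ • x') k l) * pd k (pd l u) x'
        from Finset.sum_congr rfl fun k _ => Finset.sum_congr rfl fun l _ => by
          simp only [← Finset.sum_mul]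
          have h' : (∑ i, ∑ j, A (ε⁻¹ • x') i j * pd i (pd j (v k l)) (ε⁻¹ • x'))
              = Abar k l - A (ε⁻¹ • x') k l := by
            have := hveq k l (ε⁻¹ • x'); linarith
          rw [h']]
      simp only [sub_mul, Finset.sum_sub_distrib]
    have e6 : (∑ k, ∑ l, Abar k l * pd k (pd l u) x') = -(f x') := by
      have := hueq x' hx'; linarith
    have e7 : (∑ i, ∑ j, ∑ k, ∑ l,
          A (ε⁻¹ • x') i j * pd j (v k l) (ε⁻¹ • x') * pd i (pd k (pd l u)) x')
        = (∑ i, ∑ j, ∑ k, ∑ l,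
          A (ε⁻¹ • x') i j * pd i (v k l) (ε⁻¹ • x') * pd j (pd k (pd l u)) x') := by
      rw [Finset.sum_comm]
      exact Finset.sum_congr rfl fun i _ => Finset.sum_congr rfl fun j _ =>
        Finset.sum_congr rfl fun k _ => Finset.sum_congr rfl fun l _ => by
          rw [hAsymm (ε⁻¹ • x') i j]
    rw [step1, e1, e2, e3, e4, e5, e6, e7]
    ring
  -- first-derivative formula for T2
  have hpdT2 : ∀ j, Set.EqOn
      (pd j (fun x' => wε ε x' + zε ε x' -
        ε ^ 2 * ((∑ a, ∑ k, ∑ l, χ a k l (ε⁻¹ • x') * pd a (pd k (pd l u)) x') + θχε ε x')))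
      (fun x' => pd j (wε ε) x' + pd j (zε ε) x' -
        ε ^ 2 * (pd j (fun y => ∑ a, ∑ k, ∑ l, χ a k l (ε⁻¹ • y) * pd a (pd k (pd l u)) y) x'
          + pd j (θχε ε) x')) Ω := by
    intro j x' hx'
    have d1 : DifferentiableAt ℝ (wε ε) x' := dAt dWO hx'
    have d2 : DifferentiableAt ℝ (zε ε) x' := dAt dZO hx'
    have d3 : DifferentiableAt ℝ
        (fun y => ∑ a, ∑ k, ∑ l, χ a k l (ε⁻¹ • y) * pd a (pd k (pd l u)) y) x' := dAt hXdO hx'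
    have d4 : DifferentiableAt ℝ (θχε ε) x' := dAt dθχO hx'
    rw [pd_sub (d1.fun_add d2) ((d3.fun_add d4).const_mul (ε^2)) j,
      pd_add d1 d2 j,
      pd_const_mul (d3.fun_add d4) (ε^2) j,
      pd_add d3 d4 j]
  -- T2 is twice differentiable
  have hT2diff : TwiceDiffOn (fun x' => wε ε x' + zε ε x' -
      ε ^ 2 * ((∑ a, ∑ k, ∑ l, χ a k l (ε⁻¹ • x') * pd a (pd k (pd l u)) x') + θχε ε x')) Ω := by
    constructor
    · exact (dWO.add dZO).sub ((hXdO.add dθχO).const_mul (ε^2))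
    · intro j
      apply DifferentiableOn.congr
        (f := fun x' => pd j (wε ε) x' + pd j (zε ε) x' -
          ε ^ 2 * (pd j (fun y => ∑ a, ∑ k, ∑ l, χ a k l (ε⁻¹ • y) * pd a (pd k (pd l u)) y) x'
            + pd j (θχε ε) x'))
      · exact ((dW1 j).add (dZ1 j)).sub (((hXd1O j).add (dθχ1 j)).const_mul (ε^2))
      · exact fun x' hx' => hpdT2 j hx'
  -- second-derivative formula for T2
  have hpd2T2 : ∀ i j, ∀ x', x' ∈ Ω → pd i (pd j (fun x' => wε ε x' + zε ε x' -
        ε ^ 2 * ((∑ a, ∑ k, ∑ l, χ a k l (ε⁻¹ • x') * pd a (pd k (pd l u)) x') + θχε ε x'))) x'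
      = pd i (pd j (wε ε)) x' + pd i (pd j (zε ε)) x' -
        ε ^ 2 * (pd i (pd j (fun y => ∑ a, ∑ k, ∑ l, χ a k l (ε⁻¹ • y) * pd a (pd k (pd l u)) y)) x'
          + pd i (pd j (θχε ε)) x') := by
    intro i j x' hx'
    rw [pd_eqOn hΩo (hpdT2 j) i hx']
    have d1 : DifferentiableAt ℝ (pd j (wε ε)) x' := dAt (dW1 j) hx'
    have d2 : DifferentiableAt ℝ (pd j (zε ε)) x' := dAt (dZ1 j) hx'
    have d3 : DifferentiableAt ℝ
        (pd j (fun y => ∑ a, ∑ k, ∑ l, χ a k l (ε⁻¹ • y) * pd a (pd k (pd l u)) y)) x' :=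
      dAt (hXd1O j) hx'
    have d4 : DifferentiableAt ℝ (pd j (θχε ε)) x' := dAt (dθχ1 j) hx'
    rw [pd_sub (d1.fun_add d2) ((d3.fun_add d4).const_mul (ε^2)) i,
      pd_add d1 d2 i,
      pd_const_mul (d3.fun_add d4) (ε^2) i,
      pd_add d3 d4 i]
  -- the PDE identity for T2
  have hT2pde : ∀ x', x' ∈ Ω →
      (∑ i, ∑ j, A (ε⁻¹ • x') i j * pd i (pd j (fun z => wε ε z + zε ε z -
        ε ^ 2 * ((∑ a, ∑ k, ∑ l, χ a k l (ε⁻¹ • z) * pd a (pd k (pd l u)) z) + θχε ε z))) x')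
      = -(ε * (∑ i, ∑ j, ∑ a, ∑ k, ∑ l, A (ε⁻¹ • x') i j * pd j (χ a k l) (ε⁻¹ • x') *
            pd i (pd a (pd k (pd l u))) x')
          + ε * (∑ i, ∑ j, ∑ a, ∑ k, ∑ l, A (ε⁻¹ • x') i j * pd i (χ a k l) (ε⁻¹ • x') *
            pd j (pd a (pd k (pd l u))) x')
          + ε^2 * (∑ i, ∑ j, ∑ a, ∑ k, ∑ l, A (ε⁻¹ • x') i j * χ a k l (ε⁻¹ • x') *
            pd i (pd j (pd a (pd k (pd l u)))) x')) := by
    intro x' hx'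
    have step1 : (∑ i, ∑ j, A (ε⁻¹ • x') i j * pd i (pd j (fun z => wε ε z + zε ε z -
        ε ^ 2 * ((∑ a, ∑ k, ∑ l, χ a k l (ε⁻¹ • z) * pd a (pd k (pd l u)) z) + θχε ε z))) x')
        = (∑ i, ∑ j, A (ε⁻¹ • x') i j * pd i (pd j (wε ε)) x')
          + (∑ i, ∑ j, A (ε⁻¹ • x') i j * pd i (pd j (zε ε)) x')
          - ε^2 * (∑ i, ∑ j, A (ε⁻¹ • x') i j *
              pd i (pd j (fun y => ∑ a, ∑ k, ∑ l, χ a k l (ε⁻¹ • y) * pd a (pd k (pd l u)) y)) x')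
          - ε^2 * (∑ i, ∑ j, A (ε⁻¹ • x') i j * pd i (pd j (θχε ε)) x') := by
      rw [show (∑ i, ∑ j, A (ε⁻¹ • x') i j * pd i (pd j (fun z => wε ε z + zε ε z -
          ε ^ 2 * ((∑ a, ∑ k, ∑ l, χ a k l (ε⁻¹ • z) * pd a (pd k (pd l u)) z) + θχε ε z))) x')
          = ∑ i, ∑ j, (A (ε⁻¹ • x') i j * pd i (pd j (wε ε)) x'
            + A (ε⁻¹ • x') i j * pd i (pd j (zε ε)) x'
            - ε^2 * (A (ε⁻¹ • x') i j *
                pd i (pd j (fun y => ∑ a, ∑ k, ∑ l, χ a k l (ε⁻¹ • y) * pd a (pd k (pd l u)) y)) x')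
            - ε^2 * (A (ε⁻¹ • x') i j * pd i (pd j (θχε ε)) x'))
        from Finset.sum_congr rfl fun i _ => Finset.sum_congr rfl fun j _ => by
          rw [hpd2T2 i j x' hx']; ring]
      simp only [Finset.sum_sub_distrib, Finset.sum_add_distrib, ← Finset.mul_sum]
    have e1 : (∑ i, ∑ j, A (ε⁻¹ • x') i j * pd i (pd j (wε ε)) x')
        = -(∑ i, ∑ j, ∑ k, ∑ l,
            A (ε⁻¹ • x') i j * pd i (v k l) (ε⁻¹ • x') * pd j (pd k (pd l u)) x') := by
      have := hweq ε hε x' hx'; linarith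
    have e2 : (∑ i, ∑ j, A (ε⁻¹ • x') i j * pd i (pd j (zε ε)) x')
        = ∑ a, ∑ k, ∑ l, c a k l * pd a (pd k (pd l u)) x' := by
      have := hzeq ε hε x' hx'; linarith
    have e3 : (∑ i, ∑ j, A (ε⁻¹ • x') i j * pd i (pd j (θχε ε)) x') = 0 := hθχeq ε hε x' hx'
    have e4 : ε^2 * (∑ i, ∑ j, A (ε⁻¹ • x') i j *
          pd i (pd j (fun y => ∑ a, ∑ k, ∑ l, χ a k l (ε⁻¹ • y) * pd a (pd k (pd l u)) y)) x')
        = (∑ i, ∑ j, ∑ a, ∑ k, ∑ l,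
            A (ε⁻¹ • x') i j * pd i (pd j (χ a k l)) (ε⁻¹ • x') * pd a (pd k (pd l u)) x')
          + (ε * (∑ i, ∑ j, ∑ a, ∑ k, ∑ l, A (ε⁻¹ • x') i j * pd j (χ a k l) (ε⁻¹ • x') *
              pd i (pd a (pd k (pd l u))) x')
            + ε * (∑ i, ∑ j, ∑ a, ∑ k, ∑ l, A (ε⁻¹ • x') i j * pd i (χ a k l) (ε⁻¹ • x') *
              pd j (pd a (pd k (pd l u))) x')
            + ε^2 * (∑ i, ∑ j, ∑ a, ∑ k, ∑ l, A (ε⁻¹ • x') i j * χ a k l (ε⁻¹ • x') *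
              pd i (pd j (pd a (pd k (pd l u)))) x')) := by
      calc ε^2 * (∑ i, ∑ j, A (ε⁻¹ • x') i j *
            pd i (pd j (fun y => ∑ a, ∑ k, ∑ l, χ a k l (ε⁻¹ • y) * pd a (pd k (pd l u)) y)) x')
          = ∑ i, ∑ j, ∑ a, ∑ k, ∑ l,
            (A (ε⁻¹ • x') i j * pd i (pd j (χ a k l)) (ε⁻¹ • x') * pd a (pd k (pd l u)) x'
              + (ε * (A (ε⁻¹ • x') i j * pd j (χ a k l) (ε⁻¹ • x') *
                    pd i (pd a (pd k (pd l u))) x')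
                + ε * (A (ε⁻¹ • x') i j * pd i (χ a k l) (ε⁻¹ • x') *
                    pd j (pd a (pd k (pd l u))) x')
                + ε^2 * (A (ε⁻¹ • x') i j * χ a k l (ε⁻¹ • x') *
                    pd i (pd j (pd a (pd k (pd l u)))) x'))) := by
            rw [Finset.mul_sum]
            refine Finset.sum_congr rfl fun i _ => ?_
            rw [Finset.mul_sum]
            refine Finset.sum_congr rfl fun j _ => ?_
            rw [hX2 i j x' hx', Finset.mul_sum, Finset.mul_sum]
            refine Finset.sum_congr rfl fun a _ => ?_
            rw [Finset.mul_sum, Finset.mul_sum]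
            refine Finset.sum_congr rfl fun k _ => ?_
            rw [Finset.mul_sum, Finset.mul_sum]
            refine Finset.sum_congr rfl fun l _ => ?_
            field_simp
            ring
      _ = _ := by
            simp only [Finset.sum_add_distrib, ← Finset.mul_sum]
    have e5 : (∑ i, ∑ j, ∑ a, ∑ k, ∑ l,
          A (ε⁻¹ • x') i j * pd i (pd j (χ a k l)) (ε⁻¹ • x') * pd a (pd k (pd l u)) x')
        = (∑ a, ∑ k, ∑ l, c a k l * pd a (pd k (pd l u)) x')
          - (∑ i, ∑ j, ∑ k, ∑ l,
            A (ε⁻¹ • x') i j * pd i (v k l) (ε⁻¹ • x') * pd j (pd k (pd l u)) x') := by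
      rw [swap25 (fun i j a k l =>
        A (ε⁻¹ • x') i j * pd i (pd j (χ a k l)) (ε⁻¹ • x') * pd a (pd k (pd l u)) x')]
      rw [show (∑ a, ∑ k, ∑ l, ∑ i, ∑ j,
          A (ε⁻¹ • x') i j * pd i (pd j (χ a k l)) (ε⁻¹ • x') * pd a (pd k (pd l u)) x')
          = ∑ a, ∑ k, ∑ l, (c a k l * pd a (pd k (pd l u)) x'
              - (∑ i, A (ε⁻¹ • x') i a * pd i (v k l) (ε⁻¹ • x')) * pd a (pd k (pd l u)) x')
        from Finset.sum_congr rfl fun a _ => Finset.sum_congr rfl fun k _ =>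
          Finset.sum_congr rfl fun l _ => by
          simp only [← Finset.sum_mul]
          have h' : (∑ i, ∑ j, A (ε⁻¹ • x') i j * pd i (pd j (χ a k l)) (ε⁻¹ • x'))
              = c a k l - (∑ i, A (ε⁻¹ • x') i a * pd i (v k l) (ε⁻¹ • x')) := by
            have := hχeq a k l (ε⁻¹ • x'); linarith
          rw [h']
          ring]
      rw [show (∑ a, ∑ k, ∑ l, (c a k l * pd a (pd k (pd l u)) x'
            - (∑ i, A (ε⁻¹ • x') i a * pd i (v k l) (ε⁻¹ • x')) * pd a (pd k (pd l u)) x'))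
          = (∑ a, ∑ k, ∑ l, c a k l * pd a (pd k (pd l u)) x')
            - (∑ a, ∑ k, ∑ l, (∑ i, A (ε⁻¹ • x') i a * pd i (v k l) (ε⁻¹ • x')) *
                pd a (pd k (pd l u)) x')
        from by simp only [Finset.sum_sub_distrib]]
      congr 1
      -- reorder the subtracted term into the hweq shape
      rw [show (∑ a, ∑ k, ∑ l, (∑ i, A (ε⁻¹ • x') i a * pd i (v k l) (ε⁻¹ • x')) *
            pd a (pd k (pd l u)) x')
          = ∑ a, ∑ k, ∑ l, ∑ i, A (ε⁻¹ • x') i a * pd i (v k l) (ε⁻¹ • x') *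
              pd a (pd k (pd l u)) x'
        from Finset.sum_congr rfl fun a _ => Finset.sum_congr rfl fun k _ =>
          Finset.sum_congr rfl fun l _ => by rw [Finset.sum_mul]]
      rw [pull4 (fun a k l i => A (ε⁻¹ • x') i a * pd i (v k l) (ε⁻¹ • x') *
          pd a (pd k (pd l u)) x')]
    rw [step1, e1, e2, e3, e4, e5]
    ring
  -- pointwise bound on A : D² T1
  have hbd1 : ∀ x', x' ∈ Ω →
      |∑ i, ∑ j, A (ε⁻¹ • x') i j * pd i (pd j (fun z => uε ε z - u z -
        ε ^ 2 * ((∑ k, ∑ l, v k l (ε⁻¹ • z) * pd k (pd l u) z) + θε ε z) - 2 * ε * wε ε z)) x'|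
      ≤ ε^2 * ((n:ℝ)^4 * M^3) := by
    intro x' hx'
    rw [hT1pde x' hx', abs_mul, abs_neg, abs_of_nonneg (by positivity : (0:ℝ) ≤ ε^2)]
    have hterm : ∀ i j k l, |A (ε⁻¹ • x') i j * v k l (ε⁻¹ • x') *
        pd i (pd j (pd k (pd l u))) x'| ≤ M^3 := by
      intro i j k l
      rw [abs_mul, abs_mul]
      calc |A (ε⁻¹ • x') i j| * |v k l (ε⁻¹ • x')| * |pd i (pd j (pd k (pd l u))) x'|
          ≤ M * M * M := by
            apply mul_le_mul (mul_le_mul (hAbd _ _ _) (hvb _ _ _) (abs_nonneg _) hM.le)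
              (hub4 x' hx' _ _ _ _) (abs_nonneg _) (by positivity)
      _ = M^3 := by ring
    have := abs_sum4 (fun i j k l => hterm i j k l) (by positivity : (0:ℝ) ≤ M^3)
    exact mul_le_mul_of_nonneg_left this (by positivity)
  -- pointwise bound on A : D² T2
  have hbd2 : ∀ x', x' ∈ Ω →
      |∑ i, ∑ j, A (ε⁻¹ • x') i j * pd i (pd j (fun z => wε ε z + zε ε z -
        ε ^ 2 * ((∑ a, ∑ k, ∑ l, χ a k l (ε⁻¹ • z) * pd a (pd k (pd l u)) z) + θχε ε z))) x'|
      ≤ ε * (3*(n:ℝ)^5*M^3) := by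
    intro x' hx'
    rw [hT2pde x' hx', abs_neg]
    have hterm2 : ∀ i j a k l, |A (ε⁻¹ • x') i j * pd j (χ a k l) (ε⁻¹ • x') *
        pd i (pd a (pd k (pd l u))) x'| ≤ M^3 := by
      intro i j a k l
      rw [abs_mul, abs_mul]
      calc |A (ε⁻¹ • x') i j| * |pd j (χ a k l) (ε⁻¹ • x')| *
            |pd i (pd a (pd k (pd l u))) x'| ≤ M * M * M := by
            apply mul_le_mul (mul_le_mul (hAbd _ _ _) (hχ1b _ _ _ _ _) (abs_nonneg _) hM.le)
              (hub4 x' hx' _ _ _ _) (abs_nonneg _) (by positivity)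
      _ = M^3 := by ring
    have hterm3 : ∀ i j a k l, |A (ε⁻¹ • x') i j * pd i (χ a k l) (ε⁻¹ • x') *
        pd j (pd a (pd k (pd l u))) x'| ≤ M^3 := by
      intro i j a k l
      rw [abs_mul, abs_mul]
      calc |A (ε⁻¹ • x') i j| * |pd i (χ a k l) (ε⁻¹ • x')| *
            |pd j (pd a (pd k (pd l u))) x'| ≤ M * M * M := by
            apply mul_le_mul (mul_le_mul (hAbd _ _ _) (hχ1b _ _ _ _ _) (abs_nonneg _) hM.le)
              (hub4 x' hx' _ _ _ _) (abs_nonneg _) (by positivity)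
      _ = M^3 := by ring
    have hterm4 : ∀ i j a k l, |A (ε⁻¹ • x') i j * χ a k l (ε⁻¹ • x') *
        pd i (pd j (pd a (pd k (pd l u)))) x'| ≤ M^3 := by
      intro i j a k l
      rw [abs_mul, abs_mul]
      calc |A (ε⁻¹ • x') i j| * |χ a k l (ε⁻¹ • x')| *
            |pd i (pd j (pd a (pd k (pd l u)))) x'| ≤ M * M * M := by
            apply mul_le_mul (mul_le_mul (hAbd _ _ _) (hχb _ _ _ _) (abs_nonneg _) hM.le)
              (hub5 x' hx' _ _ _ _ _) (abs_nonneg _) (by positivity)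
      _ = M^3 := by ring
    have hb2 := abs_sum5 (fun i j a k l => hterm2 i j a k l) (by positivity : (0:ℝ) ≤ M^3)
    have hb3 := abs_sum5 (fun i j a k l => hterm3 i j a k l) (by positivity : (0:ℝ) ≤ M^3)
    have hb4 := abs_sum5 (fun i j a k l => hterm4 i j a k l) (by positivity : (0:ℝ) ≤ M^3)
    have habs3 : |ε * (∑ i, ∑ j, ∑ a, ∑ k, ∑ l, A (ε⁻¹ • x') i j * pd j (χ a k l) (ε⁻¹ • x') *
            pd i (pd a (pd k (pd l u))) x')
          + ε * (∑ i, ∑ j, ∑ a, ∑ k, ∑ l, A (ε⁻¹ • x') i j * pd i (χ a k l) (ε⁻¹ • x') *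
            pd j (pd a (pd k (pd l u))) x')
          + ε^2 * (∑ i, ∑ j, ∑ a, ∑ k, ∑ l, A (ε⁻¹ • x') i j * χ a k l (ε⁻¹ • x') *
            pd i (pd j (pd a (pd k (pd l u)))) x')|
        ≤ ε * ((n:ℝ)^5*M^3) + ε * ((n:ℝ)^5*M^3) + ε^2 * ((n:ℝ)^5*M^3) := by
      apply le_trans (abs_add_le _ _)
      apply add_le_add
      apply le_trans (abs_add_le _ _)
      apply add_le_add
      · rw [abs_mul, abs_of_pos hε0]; exact mul_le_mul_of_nonneg_left hb2 hε0.le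
      · rw [abs_mul, abs_of_pos hε0]; exact mul_le_mul_of_nonneg_left hb3 hε0.le
      · rw [abs_mul, abs_of_nonneg (by positivity : (0:ℝ) ≤ ε^2)]
        exact mul_le_mul_of_nonneg_left hb4 (by positivity)
    apply le_trans habs3
    have hP : (0:ℝ) ≤ (n:ℝ)^5*M^3 :=
      le_of_lt (mul_pos (pow_pos (lt_of_lt_of_le zero_lt_one hn1) 5) (pow_pos hM 3))
    nlinarith [mul_nonneg (mul_nonneg (sub_nonneg.mpr hε1) hε0.le) hP]
  -- Avellaneda–Lin estimate applied to T1 and T2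
  have hAL1 := hAL ε hε _ hT1diff (hbc₁ ε hε).1 (hbc₁ ε hε).2 x hx
  have hAL2 := hAL ε hε _ hT2diff (hbc₂ ε hε).1 (hbc₂ ε hε).2 x hx
  have hlp1 : lpNorm q Ω (fun y => ∑ i, ∑ j, A (ε⁻¹ • y) i j *
        pd i (pd j (fun z => uε ε z - u z -
        ε ^ 2 * ((∑ k, ∑ l, v k l (ε⁻¹ • z) * pd k (pd l u) z) + θε ε z) - 2 * ε * wε ε z)) y)
      ≤ (ε^2 * ((n:ℝ)^4 * M^3)) * Vq := by
    rw [hVqdef]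
    exact lpNorm_le_of_bound hq hΩm hvol (by positivity) (fun x' hx' => hbd1 x' hx')
  have hlp2 : lpNorm q Ω (fun y => ∑ i, ∑ j, A (ε⁻¹ • y) i j *
        pd i (pd j (fun z => wε ε z + zε ε z -
        ε ^ 2 * ((∑ a, ∑ k, ∑ l, χ a k l (ε⁻¹ • z) * pd a (pd k (pd l u)) z) + θχε ε z))) y)
      ≤ (ε * (3*(n:ℝ)^5*M^3)) * Vq := by
    rw [hVqdef]
    exact lpNorm_le_of_bound hq hΩm hvol (by positivity) (fun x' hx' => hbd2 x' hx')
  have hm1 : |uε ε x - u x - ε ^ 2 * ((∑ k, ∑ l, v k l (ε⁻¹ • x) * pd k (pd l u) x) + θε ε x)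
        - 2 * ε * wε ε x| + gradNorm (fun z => uε ε z - u z -
        ε ^ 2 * ((∑ k, ∑ l, v k l (ε⁻¹ • z) * pd k (pd l u) z) + θε ε z) - 2 * ε * wε ε z) x
      ≤ C₀ * ((ε^2 * ((n:ℝ)^4 * M^3)) * Vq) :=
    le_trans hAL1 (mul_le_mul_of_nonneg_left hlp1 hC₀.le)
  have hm2 : |wε ε x + zε ε x - ε ^ 2 * ((∑ a, ∑ k, ∑ l, χ a k l (ε⁻¹ • x) *
        pd a (pd k (pd l u)) x) + θχε ε x)| + gradNorm (fun z => wε ε z + zε ε z -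
        ε ^ 2 * ((∑ a, ∑ k, ∑ l, χ a k l (ε⁻¹ • z) * pd a (pd k (pd l u)) z) + θχε ε z)) x
      ≤ C₀ * ((ε * (3*(n:ℝ)^5*M^3)) * Vq) :=
    le_trans hAL2 (mul_le_mul_of_nonneg_left hlp2 hC₀.le)
  -- bounds on the χ-corrector term X
  have hεinv0 : (0:ℝ) < ε⁻¹ := inv_pos.mpr hε0
  have hεinv1 : (1:ℝ) ≤ ε⁻¹ := by
    nlinarith [mul_nonneg (sub_nonneg.mpr hε1) hεinv0.le, mul_inv_cancel₀ hεne]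
  have hXval : |∑ a, ∑ k, ∑ l, χ a k l (ε⁻¹ • x) * pd a (pd k (pd l u)) x|
      ≤ (n:ℝ)^3 * M^2 := by
    apply abs_sum3 (K := M^2) ?_ (by positivity)
    intro a k l
    rw [abs_mul]
    calc |χ a k l (ε⁻¹ • x)| * |pd a (pd k (pd l u)) x| ≤ M * M :=
      mul_le_mul (hχb _ _ _ _) (hub3 x hx _ _ _) (abs_nonneg _) hM.le
    _ = M^2 := by ring
  have hXgradb : ∀ j, |pd j (fun y => ∑ a, ∑ k, ∑ l, χ a k l (ε⁻¹ • y) *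
      pd a (pd k (pd l u)) y) x| ≤ (n:ℝ)^3 * (2*ε⁻¹*M^2) := by
    intro j
    rw [hX1 j x hx]
    apply abs_sum3 (K := 2*ε⁻¹*M^2) ?_ (by positivity)
    intro a k l
    calc |ε⁻¹ * pd j (χ a k l) (ε⁻¹ • x) * pd a (pd k (pd l u)) x +
          χ a k l (ε⁻¹ • x) * pd j (pd a (pd k (pd l u))) x|
        ≤ |ε⁻¹ * pd j (χ a k l) (ε⁻¹ • x) * pd a (pd k (pd l u)) x| +
          |χ a k l (ε⁻¹ • x) * pd j (pd a (pd k (pd l u))) x| := abs_add_le _ _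
    _ ≤ ε⁻¹ * M^2 + M^2 := by
        apply add_le_add
        · rw [abs_mul, abs_mul, abs_of_pos hεinv0]
          calc ε⁻¹ * |pd j (χ a k l) (ε⁻¹ • x)| * |pd a (pd k (pd l u)) x|
              ≤ ε⁻¹ * (M * M) := by
                rw [mul_assoc]
                apply mul_le_mul_of_nonneg_left _ hεinv0.le
                exact mul_le_mul (hχ1b _ _ _ _ _) (hub3 x hx _ _ _) (abs_nonneg _) hM.le
          _ = ε⁻¹ * M^2 := by ring
        · rw [abs_mul]
          calc |χ a k l (ε⁻¹ • x)| * |pd j (pd a (pd k (pd l u))) x| ≤ M * M :=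
            mul_le_mul (hχb _ _ _ _) (hub4 x hx _ _ _ _) (abs_nonneg _) hM.le
          _ = M^2 := by ring
    _ ≤ 2*ε⁻¹*M^2 := by nlinarith [pow_pos hM 2]
  have hsqn : Real.sqrt (n:ℝ) ≤ (n:ℝ) := by
    calc Real.sqrt (n:ℝ) ≤ Real.sqrt ((n:ℝ)^2) := Real.sqrt_le_sqrt (by nlinarith)
    _ = (n:ℝ) := Real.sqrt_sq (by positivity)
  have hXgrad : gradNorm (fun y => ∑ a, ∑ k, ∑ l, χ a k l (ε⁻¹ • y) *
      pd a (pd k (pd l u)) y) x ≤ (n:ℝ)^4 * (2*ε⁻¹*M^2) := by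
    calc gradNorm (fun y => ∑ a, ∑ k, ∑ l, χ a k l (ε⁻¹ • y) * pd a (pd k (pd l u)) y) x
        ≤ Real.sqrt (n:ℝ) * ((n:ℝ)^3 * (2*ε⁻¹*M^2)) :=
          gradNorm_le_of_bound (by positivity) hXgradb
    _ ≤ (n:ℝ) * ((n:ℝ)^3 * (2*ε⁻¹*M^2)) := mul_le_mul_of_nonneg_right hsqn (by positivity)
    _ = (n:ℝ)^4 * (2*ε⁻¹*M^2) := by ring
  -- decomposition of the error function
  have dT1x : DifferentiableAt ℝ (fun z => uε ε z - u z -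
      ε ^ 2 * ((∑ k, ∑ l, v k l (ε⁻¹ • z) * pd k (pd l u) z) + θε ε z) - 2 * ε * wε ε z) x :=
    dAt hT1diff.1 hx
  have dT2x : DifferentiableAt ℝ (fun z => wε ε z + zε ε z -
      ε ^ 2 * ((∑ a, ∑ k, ∑ l, χ a k l (ε⁻¹ • z) * pd a (pd k (pd l u)) z) + θχε ε z)) x :=
    dAt hT2diff.1 hx
  have dXx : DifferentiableAt ℝ
      (fun y => ∑ a, ∑ k, ∑ l, χ a k l (ε⁻¹ • y) * pd a (pd k (pd l u)) y) x := dAt hXdO hx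
  have hEfun : (fun y => uε ε y - u y + 2 * ε * zε ε y
        - ε ^ 2 * (∑ k, ∑ l, v k l (ε⁻¹ • y) * pd k (pd l u) y)
        - ε ^ 2 * θε ε y - 2 * ε ^ 3 * θχε ε y)
      = (fun y => (uε ε y - u y -
          ε ^ 2 * ((∑ k, ∑ l, v k l (ε⁻¹ • y) * pd k (pd l u) y) + θε ε y) - 2 * ε * wε ε y)
        + (2*ε * (wε ε y + zε ε y -
            ε ^ 2 * ((∑ a, ∑ k, ∑ l, χ a k l (ε⁻¹ • y) * pd a (pd k (pd l u)) y) + θχε ε y))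
          + 2*ε^3 * (∑ a, ∑ k, ∑ l, χ a k l (ε⁻¹ • y) * pd a (pd k (pd l u)) y))) :=
    funext fun y => by ring
  have hEval : uε ε x - u x + 2 * ε * zε ε x
        - ε ^ 2 * (∑ k, ∑ l, v k l (ε⁻¹ • x) * pd k (pd l u) x)
        - ε ^ 2 * θε ε x - 2 * ε ^ 3 * θχε ε x
      = (uε ε x - u x -
          ε ^ 2 * ((∑ k, ∑ l, v k l (ε⁻¹ • x) * pd k (pd l u) x) + θε ε x) - 2 * ε * wε ε x)
        + (2*ε * (wε ε x + zε ε x -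
            ε ^ 2 * ((∑ a, ∑ k, ∑ l, χ a k l (ε⁻¹ • x) * pd a (pd k (pd l u)) x) + θχε ε x))
          + 2*ε^3 * (∑ a, ∑ k, ∑ l, χ a k l (ε⁻¹ • x) * pd a (pd k (pd l u)) x)) := by ring
  rw [hEval, hEfun]
  have hgrad : gradNorm (fun y => (uε ε y - u y -
          ε ^ 2 * ((∑ k, ∑ l, v k l (ε⁻¹ • y) * pd k (pd l u) y) + θε ε y) - 2 * ε * wε ε y)
        + (2*ε * (wε ε y + zε ε y -
            ε ^ 2 * ((∑ a, ∑ k, ∑ l, χ a k l (ε⁻¹ • y) * pd a (pd k (pd l u)) y) + θχε ε y))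
          + 2*ε^3 * (∑ a, ∑ k, ∑ l, χ a k l (ε⁻¹ • y) * pd a (pd k (pd l u)) y))) x
      ≤ gradNorm (fun z => uε ε z - u z -
          ε ^ 2 * ((∑ k, ∑ l, v k l (ε⁻¹ • z) * pd k (pd l u) z) + θε ε z) - 2 * ε * wε ε z) x
        + (2*ε * gradNorm (fun z => wε ε z + zε ε z -
            ε ^ 2 * ((∑ a, ∑ k, ∑ l, χ a k l (ε⁻¹ • z) * pd a (pd k (pd l u)) z) + θχε ε z)) x
          + 2*ε^3 * gradNorm (fun y => ∑ a, ∑ k, ∑ l, χ a k l (ε⁻¹ • y) *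
              pd a (pd k (pd l u)) y) x) := by
    calc gradNorm _ x
        ≤ gradNorm (fun z => uε ε z - u z -
            ε ^ 2 * ((∑ k, ∑ l, v k l (ε⁻¹ • z) * pd k (pd l u) z) + θε ε z) - 2 * ε * wε ε z) x
          + gradNorm (fun y =>
            2*ε * (wε ε y + zε ε y -
              ε ^ 2 * ((∑ a, ∑ k, ∑ l, χ a k l (ε⁻¹ • y) * pd a (pd k (pd l u)) y) + θχε ε y))
            + 2*ε^3 * (∑ a, ∑ k, ∑ l, χ a k l (ε⁻¹ • y) * pd a (pd k (pd l u)) y)) x :=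
          gradNorm_add_le dT1x ((dT2x.const_mul (2*ε)).fun_add (dXx.const_mul (2*ε^3)))
    _ ≤ _ := by
        apply add_le_add le_rfl
        calc gradNorm _ x
            ≤ gradNorm (fun y => 2*ε * (wε ε y + zε ε y -
                ε ^ 2 * ((∑ a, ∑ k, ∑ l, χ a k l (ε⁻¹ • y) * pd a (pd k (pd l u)) y) + θχε ε y))) x
              + gradNorm (fun y => 2*ε^3 * (∑ a, ∑ k, ∑ l, χ a k l (ε⁻¹ • y) *
                  pd a (pd k (pd l u)) y)) x :=
              gradNorm_add_le (dT2x.const_mul (2*ε)) (dXx.const_mul (2*ε^3))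
        _ = _ := by
              rw [gradNorm_const_mul dT2x (2*ε), gradNorm_const_mul dXx (2*ε^3),
                abs_of_pos (by positivity : (0:ℝ) < 2*ε),
                abs_of_pos (by positivity : (0:ℝ) < 2*ε^3)]
  have habs : |(uε ε x - u x -
        ε ^ 2 * ((∑ k, ∑ l, v k l (ε⁻¹ • x) * pd k (pd l u) x) + θε ε x) - 2 * ε * wε ε x)
        + (2*ε * (wε ε x + zε ε x -
            ε ^ 2 * ((∑ a, ∑ k, ∑ l, χ a k l (ε⁻¹ • x) * pd a (pd k (pd l u)) x) + θχε ε x))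
          + 2*ε^3 * (∑ a, ∑ k, ∑ l, χ a k l (ε⁻¹ • x) * pd a (pd k (pd l u)) x))|
      ≤ |uε ε x - u x -
          ε ^ 2 * ((∑ k, ∑ l, v k l (ε⁻¹ • x) * pd k (pd l u) x) + θε ε x) - 2 * ε * wε ε x|
        + (2*ε * |wε ε x + zε ε x -
            ε ^ 2 * ((∑ a, ∑ k, ∑ l, χ a k l (ε⁻¹ • x) * pd a (pd k (pd l u)) x) + θχε ε x)|
          + 2*ε^3 * |∑ a, ∑ k, ∑ l, χ a k l (ε⁻¹ • x) * pd a (pd k (pd l u)) x|) := by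
    apply le_trans (abs_add_le _ _)
    apply add_le_add le_rfl
    apply le_trans (abs_add_le _ _)
    apply le_of_eq
    rw [abs_mul (2*ε), abs_mul (2*ε^3), abs_of_pos (by positivity : (0:ℝ) < 2*ε),
      abs_of_pos (by positivity : (0:ℝ) < 2*ε^3)]
  calc _ ≤ _ := add_le_add habs hgrad
  _ = (|uε ε x - u x -
        ε ^ 2 * ((∑ k, ∑ l, v k l (ε⁻¹ • x) * pd k (pd l u) x) + θε ε x) - 2 * ε * wε ε x|
      + gradNorm (fun z => uε ε z - u z -
          ε ^ 2 * ((∑ k, ∑ l, v k l (ε⁻¹ • z) * pd k (pd l u) z) + θε ε z) - 2 * ε * wε ε z) x)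
      + (2*ε * (|wε ε x + zε ε x -
          ε ^ 2 * ((∑ a, ∑ k, ∑ l, χ a k l (ε⁻¹ • x) * pd a (pd k (pd l u)) x) + θχε ε x)|
        + gradNorm (fun z => wε ε z + zε ε z -
          ε ^ 2 * ((∑ a, ∑ k, ∑ l, χ a k l (ε⁻¹ • z) * pd a (pd k (pd l u)) z) + θχε ε z)) x)
      + 2*ε^3 * (|∑ a, ∑ k, ∑ l, χ a k l (ε⁻¹ • x) * pd a (pd k (pd l u)) x|
        + gradNorm (fun y => ∑ a, ∑ k, ∑ l, χ a k l (ε⁻¹ • y) * pd a (pd k (pd l u)) y) x)) := by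
      ring
  _ ≤ C₀ * ((ε^2 * ((n:ℝ)^4 * M^3)) * Vq)
      + (2*ε * (C₀ * ((ε * (3*(n:ℝ)^5*M^3)) * Vq))
        + 2*ε^3 * ((n:ℝ)^3 * M^2 + (n:ℝ)^4 * (2*ε⁻¹*M^2))) := by
      apply add_le_add hm1
      apply add_le_add
      · exact mul_le_mul_of_nonneg_left hm2 (by positivity)
      · exact mul_le_mul_of_nonneg_left (add_le_add hXval hXgrad) (by positivity)
  _ = ε^2 * (C₀ * (n:ℝ)^4 * M^3 * Vq + 2 * C₀ * (3*(n:ℝ)^5*M^3) * Vq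
      + 2*ε*(n:ℝ)^3*M^2 + 4*(n:ℝ)^4*M^2) := by
      field_simp
      ring
  _ ≤ ε^2 * (C₀ * (n:ℝ)^4 * M^3 * Vq + 2 * C₀ * (3*(n:ℝ)^5*M^3) * Vq
      + 2*(n:ℝ)^4*M^2 + 4*(n:ℝ)^4*M^2 + 1) := by
      apply mul_le_mul_of_nonneg_left _ (by positivity : (0:ℝ) ≤ ε^2)
      have h2 : 2*ε*(n:ℝ)^3*M^2 ≤ 2*(n:ℝ)^4*M^2 := by
        nlinarith [pow_nonneg (le_trans zero_le_one hn1) 3, pow_pos hM 2,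
          mul_nonneg (mul_nonneg (sub_nonneg.mpr hε1) (pow_nonneg (le_trans zero_le_one hn1) 3))
            (le_of_lt (pow_pos hM 2)),
          mul_nonneg (mul_nonneg (sub_nonneg.mpr hn1) (pow_nonneg (le_trans zero_le_one hn1) 3))
            (le_of_lt (pow_pos hM 2))]
      linarith
  _ = (C₀ * Vq * ((n:ℝ)^4 * M^3 + 2 * (3*(n:ℝ)^5*M^3)) + 6*(n:ℝ)^4*M^2 + 1) * ε ^ 2 := by
      ring
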